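/- Let A be an invertible linear map on ℝ^d (d ≥ 2) and ν a unit vector in ℝ^d. Then the Jacobian determinant of the restriction of A to the hyperplane ν^⊥ (as a map into ℝ^d) equals |det A| · ‖(Aᵀ)⁻¹ ν‖. Equivalently, for every Borel set S ⊆ ν^⊥, the (d−1)-dimensional Hausdorff measure satisfies H^{d−1}(A(S)) = |det A| · ‖(Aᵀ)⁻¹ ν‖ · H^{d−1}(S). -/

import Mathlib

open scoped RealInnerProductSpace MeasureTheory
open MeasureTheory Module

set_option maxHeartbeats 2000000 in
theorem stmt0 (d : ℕ) (hd : 2 ≤ d)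
    (A : EuclideanSpace ℝ (Fin d) ≃L[ℝ] EuclideanSpace ℝ (Fin d))
    (ν : EuclideanSpace ℝ (Fin d)) (hν : ‖ν‖ = 1)
    (S : Set (EuclideanSpace ℝ (Fin d))) (hS : MeasurableSet S)
    (hSperp : ∀ x ∈ S, ⟪x, ν⟫ = 0) :
    μH[(d : ℝ) - 1] ((A : EuclideanSpace ℝ (Fin d) → EuclideanSpace ℝ (Fin d)) '' S)
      = ENNReal.ofReal
          (|LinearMap.det (A : EuclideanSpace ℝ (Fin d) →ₗ[ℝ] EuclideanSpace ℝ (Fin d))| *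
            ‖(LinearMap.adjoint
                (A.symm : EuclideanSpace ℝ (Fin d) →ₗ[ℝ] EuclideanSpace ℝ (Fin d))) ν‖) *
        μH[(d : ℝ) - 1] S := by
  classical
  have hd1 : 1 ≤ d := by omega
  set w : EuclideanSpace ℝ (Fin d) := LinearMap.adjoint (A.symm : EuclideanSpace ℝ (Fin d) →ₗ[ℝ] EuclideanSpace ℝ (Fin d)) ν with hw
  have hwA : ∀ x : EuclideanSpace ℝ (Fin d), ⟪w, A x⟫ = ⟪ν, x⟫ := by
    intro x
    rw [hw, LinearMap.adjoint_inner_left]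
    simp
  have hwAν : ⟪w, A ν⟫ = 1 := by
    rw [hwA, real_inner_self_eq_norm_mul_norm, hν]; norm_num
  have hw0 : w ≠ 0 := by
    intro h
    rw [h] at hwAν
    simp at hwAν
  have hν0 : ν ≠ 0 := by
    intro h; rw [h, norm_zero] at hν; norm_num at hν
  have hwpos : (0:ℝ) < ‖w‖ := norm_pos_iff.2 hw0
  set K : Submodule ℝ (EuclideanSpace ℝ (Fin d)) := (ℝ ∙ ν)ᗮ with hKdef
  set L : Submodule ℝ (EuclideanSpace ℝ (Fin d)) := (ℝ ∙ w)ᗮ with hLdef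
  haveI : Fact (finrank ℝ (EuclideanSpace ℝ (Fin d)) = (d - 1) + 1) := ⟨by simp; omega⟩
  have hK : finrank ℝ K = d - 1 := Submodule.finrank_orthogonal_span_singleton hν0
  have hL : finrank ℝ L = d - 1 := Submodule.finrank_orthogonal_span_singleton hw0
  set kb : OrthonormalBasis (Fin (d - 1)) ℝ K :=
    (stdOrthonormalBasis ℝ K).reindex (finCongr hK) with hkb
  set lb : OrthonormalBasis (Fin (d - 1)) ℝ L :=
    (stdOrthonormalBasis ℝ L).reindex (finCongr hL) with hlb
  set u : EuclideanSpace ℝ (Fin d) := ‖w‖⁻¹ • w with hu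
  -- the adapted orthonormal families
  set b0 : Fin (d - 1) ⊕ Unit → EuclideanSpace ℝ (Fin d) := Sum.elim (fun i => (kb i : EuclideanSpace ℝ (Fin d))) (fun _ => ν) with hb0
  set c0 : Fin (d - 1) ⊕ Unit → EuclideanSpace ℝ (Fin d) := Sum.elim (fun i => (lb i : EuclideanSpace ℝ (Fin d))) (fun _ => u) with hc0
  have hkmem : ∀ i, ⟪ν, (kb i : EuclideanSpace ℝ (Fin d))⟫ = 0 := fun i =>
    Submodule.mem_orthogonal_singleton_iff_inner_right.1 (kb i).2
  have hlmem : ∀ i, ⟪w, (lb i : EuclideanSpace ℝ (Fin d))⟫ = 0 := fun i =>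
    Submodule.mem_orthogonal_singleton_iff_inner_right.1 (lb i).2
  have hb : Orthonormal ℝ b0 := by
    constructor
    · rintro (i | _)
      · simp only [hb0, Sum.elim_inl]; exact kb.orthonormal.1 i
      · simpa [hb0] using hν
    · rintro (i | _) (j | _) hij <;> simp only [hb0, Sum.elim_inl, Sum.elim_inr]
      · exact kb.orthonormal.2 (by simpa using hij)
      · rw [real_inner_comm]; exact hkmem i
      · exact hkmem j
      · simp at hij
  have hc : Orthonormal ℝ c0 := by
    constructor
    · rintro (i | _)
      · simp only [hc0, Sum.elim_inl]; exact lb.orthonormal.1 i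
      · simp [hc0, hu, norm_smul, abs_of_pos (inv_pos.2 hwpos),
          inv_mul_cancel₀ hwpos.ne']
    · rintro (i | _) (j | _) hij <;> simp only [hc0, Sum.elim_inl, Sum.elim_inr]
      · exact lb.orthonormal.2 (by simpa using hij)
      · rw [hu, real_inner_smul_right, real_inner_comm, hlmem i]; ring
      · rw [hu, real_inner_smul_left, hlmem j]; simp
      · simp at hij
  -- bases of the ambient space adapted to the decompositions
  have hcard : Fintype.card (Fin (d - 1) ⊕ Unit) = finrank ℝ (EuclideanSpace ℝ (Fin d)) := by
    simp; omega
  set bB : Basis (Fin (d - 1) ⊕ Unit) ℝ (EuclideanSpace ℝ (Fin d)) :=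
    basisOfLinearIndependentOfCardEqFinrank hb.linearIndependent hcard with hbB
  have hbBc : ⇑bB = b0 := coe_basisOfLinearIndependentOfCardEqFinrank _ _
  set cB : Basis (Fin (d - 1) ⊕ Unit) ℝ (EuclideanSpace ℝ (Fin d)) :=
    basisOfLinearIndependentOfCardEqFinrank hc.linearIndependent hcard with hcB
  have hcBc : ⇑cB = c0 := coe_basisOfLinearIndependentOfCardEqFinrank _ _
  set bOB : OrthonormalBasis (Fin (d - 1) ⊕ Unit) ℝ (EuclideanSpace ℝ (Fin d)) :=
    bB.toOrthonormalBasis (hbBc ▸ hb) with hbOB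
  set cOB : OrthonormalBasis (Fin (d - 1) ⊕ Unit) ℝ (EuclideanSpace ℝ (Fin d)) :=
    cB.toOrthonormalBasis (hcBc ▸ hc) with hcOB
  -- A maps K to L
  have hAKL : ∀ x : K, ((A : EuclideanSpace ℝ (Fin d) →ₗ[ℝ] EuclideanSpace ℝ (Fin d)).comp
      K.subtype) x ∈ L := by
    intro x
    rw [hLdef, Submodule.mem_orthogonal_singleton_iff_inner_right]
    have := hwA (x : EuclideanSpace ℝ (Fin d))
    simpa [Submodule.mem_orthogonal_singleton_iff_inner_right.1 x.2] using this
  set AKL : K →ₗ[ℝ] L :=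
    LinearMap.codRestrict L ((A : EuclideanSpace ℝ (Fin d) →ₗ[ℝ] EuclideanSpace ℝ (Fin d)).comp
      K.subtype) hAKL with hAKLdef
  set B : EuclideanSpace ℝ (Fin (d - 1)) →ₗ[ℝ] EuclideanSpace ℝ (Fin (d - 1)) :=
    (lb.repr.toLinearEquiv.toLinearMap.comp AKL).comp
      kb.repr.symm.toLinearEquiv.toLinearMap with hBdef
  -- isometric parametrizations of K and L
  set eL : EuclideanSpace ℝ (Fin (d - 1)) →ₗᵢ[ℝ] EuclideanSpace ℝ (Fin d) :=
    K.subtypeₗᵢ.comp kb.repr.symm.toLinearIsometry with heL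
  set fL : EuclideanSpace ℝ (Fin (d - 1)) →ₗᵢ[ℝ] EuclideanSpace ℝ (Fin d) :=
    L.subtypeₗᵢ.comp lb.repr.symm.toLinearIsometry with hfL
  have hcomm : ∀ y : EuclideanSpace ℝ (Fin (d - 1)),
      fL (B y) = (A : EuclideanSpace ℝ (Fin d) → EuclideanSpace ℝ (Fin d)) (eL y) := by
    intro y
    simp [hfL, heL, hBdef, hAKLdef]
  have hSK : S ⊆ Set.range eL := by
    intro x hx
    have hxK : x ∈ K := by
      rw [hKdef, Submodule.mem_orthogonal_singleton_iff_inner_left]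
      exact hSperp x hx
    exact ⟨kb.repr ⟨x, hxK⟩, by simp [heL]⟩
  set S' : Set (EuclideanSpace ℝ (Fin (d - 1))) := eL ⁻¹' S with hS'
  have hS'img : eL '' S' = S := Set.image_preimage_eq_of_subset hSK
  have himg : (A : EuclideanSpace ℝ (Fin d) → EuclideanSpace ℝ (Fin d)) '' S
      = fL '' (B '' S') := by
    rw [← hS'img, ← Set.image_comp, ← Set.image_comp]
    exact Set.image_congr' (fun y => (hcomm y).symm)
  -- Hausdorff measure computations
  have hdr : ((d - 1 : ℕ) : ℝ) = (d : ℝ) - 1 := by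
    push_cast [Nat.cast_sub hd1]; ring
  have hdnn : (0:ℝ) ≤ (d : ℝ) - 1 := by
    have : (1:ℝ) ≤ (d:ℝ) := by exact_mod_cast hd1
    linarith
  have hfr' : finrank ℝ (EuclideanSpace ℝ (Fin (d - 1))) = d - 1 := by simp
  haveI hHaar : (μH[((d - 1 : ℕ) : ℝ)] :
      Measure (EuclideanSpace ℝ (Fin (d - 1)))).IsAddHaarMeasure := by
    have h := MeasureTheory.isAddHaarMeasure_hausdorffMeasure
      (E := EuclideanSpace ℝ (Fin (d - 1)))
    rwa [hfr'] at h
  have hmeas1 : μH[(d : ℝ) - 1]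
      ((A : EuclideanSpace ℝ (Fin d) → EuclideanSpace ℝ (Fin d)) '' S)
      = ENNReal.ofReal |LinearMap.det B| * μH[(d : ℝ) - 1] S := by
    rw [himg, fL.isometry.hausdorffMeasure_image (Or.inl hdnn), ← hS'img,
      eL.isometry.hausdorffMeasure_image (Or.inl hdnn), ← hdr,
      Measure.addHaar_image_linearMap _ B S']
  rw [hmeas1]
  -- it remains to identify the determinant
  have hdetB : |LinearMap.det B| =
      |LinearMap.det (A : EuclideanSpace ℝ (Fin d) →ₗ[ℝ] EuclideanSpace ℝ (Fin d))| * ‖w‖ := by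
    set Alin : EuclideanSpace ℝ (Fin d) →ₗ[ℝ] EuclideanSpace ℝ (Fin d) :=
      (A : EuclideanSpace ℝ (Fin d) →ₗ[ℝ] EuclideanSpace ℝ (Fin d)) with hAlin
    set T := LinearMap.toMatrix bOB.toBasis cOB.toBasis Alin with hT
    have hbOBb : bOB.toBasis = bB := Basis.toBasis_toOrthonormalBasis _ _
    have hcOBb : cOB.toBasis = cB := Basis.toBasis_toOrthonormalBasis _ _
    have hcOBc : ⇑cOB = c0 := by rw [hcOB, Basis.coe_toOrthonormalBasis, hcBc]
    have hTapp : ∀ i j, T i j = ⟪c0 i, Alin (b0 j)⟫ := by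
      intro i j
      rw [hT, LinearMap.toMatrix_apply, OrthonormalBasis.coe_toBasis_repr_apply,
        OrthonormalBasis.repr_apply_apply, hcOBc, hbOBb, hbBc]
    -- the blocks of T
    set bf := (EuclideanSpace.basisFun (Fin (d - 1)) ℝ).toBasis with hbf
    have hT11 : T.toBlocks₁₁ = LinearMap.toMatrix bf bf B := by
      ext i j
      have hL : T.toBlocks₁₁ i j = ⟪(lb i : EuclideanSpace ℝ (Fin d)),
          Alin (kb j : EuclideanSpace ℝ (Fin d))⟫ := by
        simp only [Matrix.toBlocks₁₁, Matrix.of_apply, hTapp, hc0, hb0, Sum.elim_inl]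
      rw [hL, LinearMap.toMatrix_apply, hbf, OrthonormalBasis.coe_toBasis_repr_apply,
        OrthonormalBasis.coe_toBasis, EuclideanSpace.basisFun_apply,
        EuclideanSpace.basisFun_repr, hBdef]
      simp only [LinearMap.coe_comp, Function.comp_apply, LinearEquiv.coe_coe,
        LinearIsometryEquiv.coe_toLinearEquiv, OrthonormalBasis.repr_symm_single]
      rw [OrthonormalBasis.repr_apply_apply]
      rfl
    have hT21 : T.toBlocks₂₁ = 0 := by
      ext i j
      have : T.toBlocks₂₁ i j = ⟪u, Alin (kb j : EuclideanSpace ℝ (Fin d))⟫ := by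
        simp only [Matrix.toBlocks₂₁, Matrix.of_apply, hTapp, hc0, hb0, Sum.elim_inl,
          Sum.elim_inr]
      rw [this, hu, real_inner_smul_left]
      have hA : ⟪w, Alin (kb j : EuclideanSpace ℝ (Fin d))⟫ = 0 := by
        have := hwA (kb j : EuclideanSpace ℝ (Fin d))
        rw [hkmem j] at this
        exact this
      rw [hA]
      simp
    have hT22 : T.toBlocks₂₂ = Matrix.of fun _ _ => ‖w‖⁻¹ := by
      ext i j
      have : T.toBlocks₂₂ i j = ⟪u, Alin ν⟫ := by
        simp only [Matrix.toBlocks₂₂, Matrix.of_apply, hTapp, hc0, hb0, Sum.elim_inr]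
      rw [this, hu, real_inner_smul_left]
      have : ⟪w, Alin ν⟫ = 1 := hwAν
      rw [this]
      simp
    have hdetT : T.det = LinearMap.det B * ‖w‖⁻¹ := by
      rw [← Matrix.fromBlocks_toBlocks T, hT21, Matrix.det_fromBlocks_zero₂₁, hT11, hT22,
        LinearMap.det_toMatrix, Matrix.det_unique]
      rfl
    have hsplit : LinearMap.toMatrix bOB.toBasis bOB.toBasis Alin
        = LinearMap.toMatrix cOB.toBasis bOB.toBasis LinearMap.id * T := by
      rw [hT, ← LinearMap.toMatrix_comp, LinearMap.id_comp]
    have hdetA : LinearMap.det Alin = (bOB.toBasis.det ⇑cOB.toBasis) * T.det := by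
      rw [← LinearMap.det_toMatrix bOB.toBasis Alin, hsplit, Matrix.det_mul,
        LinearMap.toMatrix_id_eq_basis_toMatrix, ← Basis.det_apply]
    have hes : |bOB.toBasis.det ⇑cOB.toBasis| = 1 := by
      have h := bOB.det_to_matrix_orthonormalBasis_real cOB
      rw [OrthonormalBasis.coe_toBasis]
      rcases h with h | h <;> rw [h] <;> norm_num
    have habs : |LinearMap.det Alin| = |LinearMap.det B| * ‖w‖⁻¹ := by
      rw [hdetA, abs_mul, hes, one_mul, hdetT, abs_mul, abs_inv, abs_of_pos hwpos]
    rw [habs]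
    field_simp
  rw [hdetB]
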